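/- Let k be an integer with k ≥ 1 and m ∈ ℤ. Define ₁F₁(a; b; z) = Σ_{n=0}^∞ ((a)_n / (b)_n) zⁿ/n!, Ψ_{m,k}(θ,y) = e^{−i m θ/2} e^{−y²/2} y^k · ₁F₁( (1 + 2k − m)/4 ; k + 1/2 ; y² ), and for smooth F : ℝ² → ℂ define (E⁺ F)(θ,y) = e^{−iθ} ( y F(θ,y) − ∂_y F(θ,y) ). Then for all (θ,y) ∈ ℝ²: (E⁺ Ψ_{m,k})(θ,y) = ( (1 + 2k + m)(k−1) / ((2k−1)(2k+1)) ) · Ψ_{m+2,k+1}(θ,y) − k · Ψ_{m+2,k−1}(θ,y). -/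

import Mathlib

open Complex

/-- The confluent hypergeometric function
`₁F₁(a;b;z) = Σ_{n≥0} ((a)_n/(b)_n) zⁿ/n!` (Pochhammer rising factorials). -/
noncomputable def oneFone (a b z : ℂ) : ℂ :=
  ∑' n : ℕ, ((ascPochhammer ℂ n).eval a / (ascPochhammer ℂ n).eval b) * z ^ n
    / (n.factorial : ℂ)

/-- The weight-`m` `K`-finite vector
`Ψ_{m,k}(θ,y) = e^{-imθ/2} e^{-y²/2} y^k ₁F₁((1+2k-m)/4; k+1/2; y²)`. -/
noncomputable def Psi (m : ℤ) (k : ℕ) (θ y : ℝ) : ℂ :=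
  Complex.exp (-I * (m : ℂ) * (θ : ℂ) / 2) * Complex.exp (-(y : ℂ) ^ 2 / 2)
    * (y : ℂ) ^ k
    * oneFone ((1 + 2 * (k : ℂ) - (m : ℂ)) / 4) ((k : ℂ) + 1/2) ((y : ℂ) ^ 2)

/-- Partial derivative in the second variable `y`. -/
noncomputable def pderivY (F : ℝ → ℝ → ℂ) (θ y : ℝ) : ℂ := deriv (fun y' => F θ y') y

/-- The Heisenberg operator `(E⁺F)(θ,y) = e^{-iθ}(yF - ∂_yF)`. -/
noncomputable def Eplus (F : ℝ → ℝ → ℂ) (θ y : ℝ) : ℂ :=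
  Complex.exp (-I * (θ : ℂ)) * ((y : ℂ) * F θ y - pderivY F θ y)


namespace EplusAux

noncomputable def P (a : ℂ) (n : ℕ) : ℂ := (ascPochhammer ℂ n).eval a
noncomputable def Pr (b : ℝ) (n : ℕ) : ℝ := (ascPochhammer ℝ n).eval b

lemma P_zero (a : ℂ) : P a 0 = 1 := by simp [P]
lemma P_succ (a : ℂ) (n : ℕ) : P a (n+1) = P a n * (a + n) := ascPochhammer_succ_eval n a
lemma Pr_zero (b : ℝ) : Pr b 0 = 1 := by simp [Pr]
lemma Pr_succ (b : ℝ) (n : ℕ) : Pr b (n+1) = Pr b n * (b + n) := ascPochhammer_succ_eval n b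

lemma P_succ_left (a : ℂ) (n : ℕ) : P a (n+1) = a * P (a+1) n := by
  induction n with
  | zero => simp [P_succ, P_zero]
  | succ n ih => rw [P_succ, ih, P_succ]; push_cast; ring

lemma Pr_pos {b : ℝ} (hb : 0 < b) (n : ℕ) : 0 < Pr b n := by
  induction n with
  | zero => simp [Pr_zero]
  | succ n ih => rw [Pr_succ]; positivity

lemma P_ofReal (b : ℝ) (n : ℕ) : P (b:ℂ) n = ((Pr b n : ℝ) : ℂ) := by
  induction n with
  | zero => simp [P_zero, Pr_zero]
  | succ n ih => rw [P_succ, Pr_succ, ih]; push_cast; ring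

lemma P_norm_le (a : ℂ) {b : ℝ} (hb : (1:ℝ)/2 ≤ b) (n : ℕ) :
    ‖P a n‖ ≤ (2*(‖a‖+1))^n * Pr b n := by
  have hb0 : (0:ℝ) < b := lt_of_lt_of_le (by norm_num) hb
  induction n with
  | zero => simp [P_zero, Pr_zero]
  | succ n ih =>
    rw [P_succ, Pr_succ, norm_mul, pow_succ]
    have h1 : ‖a + (n:ℂ)‖ ≤ ‖a‖ + n := by
      calc ‖a + (n:ℂ)‖ ≤ ‖a‖ + ‖(n:ℂ)‖ := norm_add_le _ _
      _ = ‖a‖ + n := by rw [Complex.norm_natCast]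
    have h2 : ‖a‖ + (n:ℝ) ≤ 2*(‖a‖+1) * (b + n) := by
      have hn : (0:ℝ) ≤ n := Nat.cast_nonneg n
      have ha : (0:ℝ) ≤ ‖a‖ := norm_nonneg a
      nlinarith
    have hP : (0:ℝ) ≤ ‖P a n‖ := norm_nonneg _
    have hPr : (0:ℝ) < Pr b n := Pr_pos hb0 n
    have hM : (0:ℝ) ≤ (2*(‖a‖+1))^n := by positivity
    calc ‖P a n‖ * ‖a + (n:ℂ)‖ ≤ ((2*(‖a‖+1))^n * Pr b n) * (2*(‖a‖+1)*(b+n)) := by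
          apply mul_le_mul ih (h1.trans h2) (norm_nonneg _) (by positivity)
    _ = (2*(‖a‖+1))^n * (2*(‖a‖+1)) * (Pr b n * (b+n)) := by ring

/-- coefficient of the series -/
noncomputable def co (a : ℂ) (b : ℝ) (n : ℕ) : ℂ := P a n / P (b:ℂ) n / (n.factorial : ℂ)

lemma summable_aux (R : ℝ) : Summable (fun n : ℕ => ((n:ℝ)+1) * R^n / n.factorial) := by
  have h1 := Real.summable_pow_div_factorial R
  have h2 : Summable (fun n : ℕ => (n:ℝ) * R^n / n.factorial) := by
    apply (summable_nat_add_iff 1).mp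
    have : (fun n : ℕ => ((n+1 : ℕ):ℝ) * R^(n+1) / (n+1).factorial)
        = fun n : ℕ => R * (R^n / n.factorial) := by
      funext n
      rw [Nat.factorial_succ]
      push_cast
      have h : ((n:ℝ)+1) ≠ 0 := by positivity
      field_simp
      ring
    rw [this]
    exact h1.mul_left R
  have := h2.add h1
  refine this.congr fun n => ?_
  ring

lemma summable_main (a : ℂ) {b : ℝ} (hb : (1:ℝ)/2 ≤ b) (w : ℂ) (q : ℕ → ℂ) (K : ℝ)
    (hq : ∀ n, ‖q n‖ ≤ K * (n+1)) :
    Summable (fun n : ℕ => q n * co a b n * w ^ (2*n)) := by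
  have hb0 : (0:ℝ) < b := lt_of_lt_of_le (by norm_num) hb
  set R : ℝ := 2*(‖a‖+1) * ‖w‖^2 + 1 with hR
  have hK : 0 ≤ K := le_trans (norm_nonneg (q 0)) (by simpa using hq 0)
  apply Summable.of_norm_bounded (g := fun n : ℕ => K * (((n:ℝ)+1) * R^n / n.factorial))
    ((summable_aux R).mul_left K)
  intro n
  have hPr : (0:ℝ) < Pr b n := Pr_pos hb0 n
  have hfac : (0:ℝ) < (n.factorial : ℝ) := by positivity
  rw [norm_mul, norm_mul, co, norm_div, norm_div, P_ofReal, norm_pow]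
  rw [Complex.norm_real, Real.norm_eq_abs, abs_of_pos hPr, Complex.norm_natCast]
  have hle1 : ‖P a n‖ ≤ (2*(‖a‖+1))^n * Pr b n := P_norm_le a hb n
  have key : ‖P a n‖ / Pr b n / (n.factorial:ℝ) * ‖w‖^(2*n)
      ≤ R^n / (n.factorial:ℝ) := by
    rw [pow_mul]
    have h2 : ‖P a n‖ / Pr b n ≤ (2*(‖a‖+1))^n := by
      rw [div_le_iff₀ hPr]; exact hle1
    have h3 : ‖P a n‖ / Pr b n * (‖w‖^2)^n ≤ (2*(‖a‖+1))^n * (‖w‖^2)^n :=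
      mul_le_mul_of_nonneg_right h2 (by positivity)
    have h4 : (2*(‖a‖+1))^n * (‖w‖^2)^n ≤ R^n := by
      rw [← mul_pow]
      apply pow_le_pow_left₀ (by positivity)
      rw [hR]; nlinarith [sq_nonneg ‖w‖, norm_nonneg a, norm_nonneg w]
    have h5 : ‖P a n‖ / Pr b n * (‖w‖^2)^n ≤ R^n := h3.trans h4
    calc ‖P a n‖ / Pr b n / (n.factorial:ℝ) * (‖w‖^2)^n
        = (‖P a n‖ / Pr b n * (‖w‖^2)^n) / (n.factorial:ℝ) := by ring
      _ ≤ R^n / (n.factorial:ℝ) := by gcongr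
  calc ‖q n‖ * (‖P a n‖ / Pr b n / (n.factorial:ℝ)) * ‖w‖^(2*n)
      = ‖q n‖ * (‖P a n‖ / Pr b n / (n.factorial:ℝ) * ‖w‖^(2*n)) := by ring
    _ ≤ (K * ((n:ℝ)+1)) * (R^n / (n.factorial:ℝ)) :=
        mul_le_mul (hq n) key (by positivity) (by positivity)
    _ = K * (((n:ℝ)+1) * R^n / n.factorial) := by ring


def shift (c : ℕ → ℂ) : ℕ → ℂ
  | 0 => 0
  | (n+1) => c n

lemma summable_shift (c : ℕ → ℂ) (w : ℂ) (hc : Summable fun n => c n * w^(2*n)) :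
    Summable fun n => shift c n * w^(2*n) := by
  apply (summable_nat_add_iff 1).mp
  refine (hc.mul_right (w^2)).congr fun n => ?_
  show c n * w ^ (2*n) * w^2 = shift c (n+1) * w^(2*(n+1))
  simp only [shift]
  ring

lemma sq_mul_tsum (c : ℕ → ℂ) (w : ℂ) (hc : Summable fun n => c n * w^(2*n)) :
    w^2 * ∑' n, c n * w^(2*n) = ∑' n, shift c n * w^(2*n) := by
  rw [Summable.tsum_eq_zero_add (summable_shift c w hc)]
  simp only [shift, zero_mul, zero_add]
  rw [← tsum_mul_left]
  exact tsum_congr fun n => by ring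

lemma summable_co (a : ℂ) {b : ℝ} (hb : (1:ℝ)/2 ≤ b) (w : ℂ) :
    Summable fun n : ℕ => co a b n * w^(2*n) := by
  have := summable_main a hb w (fun _ => 1) 1 (fun n => by
    simp)
  simpa using this

lemma summable_co_lin (a : ℂ) {b : ℝ} (hb : (1:ℝ)/2 ≤ b) (w : ℂ) (d : ℕ) :
    Summable fun n : ℕ => ((d:ℂ) + 2*(n:ℕ)) * co a b n * w^(2*n) := by
  apply summable_main a hb w (fun n : ℕ => ((d:ℂ) + 2*(n:ℕ))) ((d:ℝ)+2)
  intro n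
  have : ‖(d:ℂ) + 2*(n:ℂ)‖ ≤ (d:ℝ) + 2*n := by
    calc ‖(d:ℂ) + 2*(n:ℂ)‖ ≤ ‖(d:ℂ)‖ + ‖2*(n:ℂ)‖ := norm_add_le _ _
    _ = (d:ℝ) + 2*n := by
        rw [norm_mul, Complex.norm_natCast, Complex.norm_natCast]
        norm_num
  refine le_trans (le_of_eq ?_) (this.trans ?_)
  · norm_cast
  · have hn : (0:ℝ) ≤ n := Nat.cast_nonneg n
    have hd : (0:ℝ) ≤ d := Nat.cast_nonneg d
    nlinarith

lemma summable_co_two (a : ℂ) {b : ℝ} (hb : (1:ℝ)/2 ≤ b) (w : ℂ) :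
    Summable fun n : ℕ => (2*(n:ℂ)) * co a b n * w^(2*n) := by
  have := summable_co_lin a hb w 0
  refine this.congr fun n => ?_
  push_cast
  ring

lemma hasDerivAt_G (a : ℂ) {b : ℝ} (hb : (1:ℝ)/2 ≤ b) (y : ℝ) :
    HasDerivAt (fun t : ℝ => ∑' n, co a b n * (t:ℂ)^(2*n))
      (∑' n, co a b n * (((2*n : ℕ):ℂ) * (y:ℂ)^(2*n-1))) y := by
  set r : ℝ := |y| + 1 with hr
  have hr1 : (1:ℝ) ≤ r := by rw [hr]; linarith [abs_nonneg y]
  have hr0 : (0:ℝ) < r := lt_of_lt_of_le one_pos hr1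
  have hyr : |y| < r := by rw [hr]; linarith
  have hsum : Summable fun n : ℕ => ((2*(n+1) : ℕ) : ℂ) * co a b n * ((r:ℂ))^(2*n) := by
    apply summable_main a hb ((r:ℂ)) _ 2
    intro n
    rw [Complex.norm_natCast]
    push_cast
    linarith
  have hu : Summable fun n : ℕ => ‖((2*(n+1) : ℕ) : ℂ) * co a b n * ((r:ℂ))^(2*n)‖ :=
    summable_norm_iff.mpr hsum
  apply hasDerivAt_tsum_of_isPreconnected hu (Metric.isOpen_ball (x := (0:ℝ)) (ε := r))
      ((convex_ball (0:ℝ) r).isPreconnected)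
      (g := fun n (t : ℝ) => co a b n * (t:ℂ)^(2*n))
      (g' := fun n (t : ℝ) => co a b n * (((2*n : ℕ):ℂ) * (t:ℂ)^(2*n-1)))
      (y₀ := y)
  · intro n t _
    exact ((hasDerivAt_pow (2*n) ((t:ℝ):ℂ)).comp_ofReal).const_mul (co a b n)
  · intro n t ht
    rw [Metric.mem_ball, Real.dist_eq, sub_zero] at ht
    have h1 : |t|^(2*n-1) ≤ r^(2*n) := by
      calc |t|^(2*n-1) ≤ r^(2*n-1) := pow_le_pow_left₀ (abs_nonneg t) ht.le _
        _ ≤ r^(2*n) := pow_le_pow_right₀ hr1 (Nat.sub_le _ _)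
    have e1 : ‖co a b n * (((2*n : ℕ):ℂ) * (t:ℂ)^(2*n-1))‖
        = ‖co a b n‖ * (((2*n : ℕ):ℝ) * |t|^(2*n-1)) := by
      simp [norm_mul, norm_pow, Complex.norm_real, Real.norm_eq_abs]
    have e2 : ‖((2*(n+1) : ℕ) : ℂ) * co a b n * ((r:ℂ))^(2*n)‖
        = ((2*(n+1) : ℕ):ℝ) * ‖co a b n‖ * r^(2*n) := by
      rw [norm_mul, norm_mul, Complex.norm_natCast, norm_pow, Complex.norm_real,
        Real.norm_eq_abs, abs_of_pos hr0]
    rw [e1, e2]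
    have h2 : ((2*n : ℕ):ℝ) ≤ ((2*(n+1) : ℕ):ℝ) := by push_cast; linarith
    calc ‖co a b n‖ * (((2*n : ℕ):ℝ) * |t|^(2*n-1))
        ≤ ‖co a b n‖ * (((2*(n+1) : ℕ):ℝ) * r^(2*n)) := by
          apply mul_le_mul_of_nonneg_left _ (norm_nonneg _)
          exact mul_le_mul h2 h1 (by positivity) (by positivity)
      _ = ((2*(n+1) : ℕ):ℝ) * ‖co a b n‖ * r^(2*n) := by ring
  · rw [Metric.mem_ball, Real.dist_eq, sub_zero]; exact hyr
  · exact summable_co a hb ((y:ℝ):ℂ)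
  · rw [Metric.mem_ball, Real.dist_eq, sub_zero]; exact hyr


lemma P_real_ne {b : ℝ} (hb : 0 < b) (n : ℕ) : P (b:ℂ) n ≠ 0 := by
  rw [P_ofReal]
  exact_mod_cast (Pr_pos hb n).ne'

set_option maxHeartbeats 1600000 in
lemma key_alg (a b kC mC jC Aj Bj fj : ℂ) (hb : b ≠ 0) (hbj : Bj ≠ 0)
    (hbm1 : b - 1 ≠ 0) (hS : b + jC ≠ 0) (h1 : 2*kC-1 ≠ 0) (h2 : 2*kC+1 ≠ 0)
    (hj : jC + 1 ≠ 0) (hf : fj ≠ 0)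
    (hav : a = (1+2*kC-mC)/4) (hbv : b = kC + 1/2) :
    2 * (Aj/Bj/fj) - (kC + 2*(jC+1)) * (Aj*(a+jC)/(Bj*(b+jC))/((jC+1)*fj))
    = ((1+2*kC+mC)*(kC-1)/((2*kC-1)*(2*kC+1))) * (Aj*b/(Bj*(b+jC))/fj)
      - kC * ((a-1)*Aj/((b-1)*Bj)/((jC+1)*fj)) := by
  set PQ : ℂ := (2*kC-1)*(2*kC+1) with hPQdef
  have hPQ : PQ ≠ 0 := mul_ne_zero h1 h2
  set D : ℂ := Bj * fj * (b+jC) * (jC+1) * (b-1) * PQ with hDdef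
  have hD : D ≠ 0 := by
    apply mul_ne_zero (mul_ne_zero (mul_ne_zero (mul_ne_zero (mul_ne_zero hbj hf) hS) hj) hbm1) hPQ
  apply mul_right_cancel₀ hD
  have T1 : (Aj/Bj/fj) * D = Aj * ((b+jC)*(jC+1)*(b-1)*PQ) := by
    rw [div_div, show D = (Bj*fj) * ((b+jC)*(jC+1)*(b-1)*PQ) from by rw [hDdef]; ring,
      ← mul_assoc, div_mul_cancel₀ _ (mul_ne_zero hbj hf)]
  have T2 : (Aj*(a+jC)/(Bj*(b+jC))/((jC+1)*fj)) * D = Aj*(a+jC) * ((b-1)*PQ) := by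
    rw [div_div, show D = (Bj*(b+jC)*((jC+1)*fj)) * ((b-1)*PQ) from by rw [hDdef]; ring,
      ← mul_assoc, div_mul_cancel₀ _ (by
        exact mul_ne_zero (mul_ne_zero hbj hS) (mul_ne_zero hj hf))]
  have T3 : (Aj*b/(Bj*(b+jC))/fj) * D = Aj*b * ((jC+1)*(b-1)*PQ) := by
    rw [div_div, show D = (Bj*(b+jC)*fj) * ((jC+1)*(b-1)*PQ) from by rw [hDdef]; ring,
      ← mul_assoc, div_mul_cancel₀ _ (mul_ne_zero (mul_ne_zero hbj hS) hf)]
  have T4 : ((a-1)*Aj/((b-1)*Bj)/((jC+1)*fj)) * D = (a-1)*Aj * ((b+jC)*PQ) := by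
    rw [div_div, show D = ((b-1)*Bj*((jC+1)*fj)) * ((b+jC)*PQ) from by rw [hDdef]; ring,
      ← mul_assoc, div_mul_cancel₀ _ (by
        exact mul_ne_zero (mul_ne_zero hbm1 hbj) (mul_ne_zero hj hf))]
  have T3' : (((1+2*kC+mC)*(kC-1)/PQ) * (Aj*b/(Bj*(b+jC))/fj)) * D
      = (1+2*kC+mC)*(kC-1) * (Aj*b*((jC+1)*(b-1))) := by
    rw [show (((1+2*kC+mC)*(kC-1)/PQ) * (Aj*b/(Bj*(b+jC))/fj)) * D
        = ((1+2*kC+mC)*(kC-1)/PQ) * ((Aj*b/(Bj*(b+jC))/fj) * D) from by ring, T3,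
      show ((1+2*kC+mC)*(kC-1)/PQ) * (Aj*b*((jC+1)*(b-1)*PQ))
        = (Aj*b*((jC+1)*(b-1))) * (((1+2*kC+mC)*(kC-1)/PQ) * PQ) from by ring,
      div_mul_cancel₀ _ hPQ]
    ring
  calc (2 * (Aj/Bj/fj) - (kC + 2*(jC+1)) * (Aj*(a+jC)/(Bj*(b+jC))/((jC+1)*fj))) * D
      = 2 * ((Aj/Bj/fj) * D)
        - (kC + 2*(jC+1)) * ((Aj*(a+jC)/(Bj*(b+jC))/((jC+1)*fj)) * D) := by ring
    _ = 2 * (Aj * ((b+jC)*(jC+1)*(b-1)*PQ))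
        - (kC + 2*(jC+1)) * (Aj*(a+jC) * ((b-1)*PQ)) := by rw [T1, T2]
    _ = (1+2*kC+mC)*(kC-1) * (Aj*b*((jC+1)*(b-1)))
        - kC * ((a-1)*Aj * ((b+jC)*PQ)) := by
          subst hav hbv
          rw [hPQdef]
          ring
    _ = (((1+2*kC+mC)*(kC-1)/PQ) * (Aj*b/(Bj*(b+jC))/fj)) * D
        - kC * (((a-1)*Aj/((b-1)*Bj)/((jC+1)*fj)) * D) := by rw [T3', T4]
    _ = (((1+2*kC+mC)*(kC-1)/PQ) * (Aj*b/(Bj*(b+jC))/fj)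
        - kC * ((a-1)*Aj/((b-1)*Bj)/((jC+1)*fj))) * D := by ring

set_option maxHeartbeats 3200000 in
lemma coef_id (k : ℕ) (hk : 1 ≤ k) (m : ℤ) (n : ℕ) :
    2 * shift (co ((1+2*(k:ℂ)-(m:ℂ))/4) ((k:ℝ)+1/2)) n
      - ((k:ℂ) + 2*(n:ℕ)) * co ((1+2*(k:ℂ)-(m:ℂ))/4) ((k:ℝ)+1/2) n
    = ((1 + 2*(k:ℂ) + (m:ℂ)) * ((k:ℂ) - 1) / ((2*(k:ℂ) - 1) * (2*(k:ℂ) + 1)))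
        * shift (co ((1+2*(k:ℂ)-(m:ℂ))/4) ((k:ℝ)+1/2+1)) n
      - (k:ℂ) * co ((1+2*(k:ℂ)-(m:ℂ))/4 - 1) ((k:ℝ)+1/2-1) n := by
  have hk1 : (1:ℝ) ≤ (k:ℝ) := by exact_mod_cast hk
  set a : ℂ := (1+2*(k:ℂ)-(m:ℂ))/4 with ha
  have c1 : (((k:ℝ)+1/2 : ℝ):ℂ) = (k:ℂ) + 1/2 := by push_cast; ring
  have c2 : (((k:ℝ)+1/2+1 : ℝ):ℂ) = (k:ℂ) + 1/2 + 1 := by push_cast; ring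
  have c3 : (((k:ℝ)+1/2-1 : ℝ):ℂ) = (k:ℂ) + 1/2 - 1 := by push_cast; ring
  have h2k1 : (2*(k:ℂ) - 1) ≠ 0 := by
    rw [show (2*(k:ℂ)-1) = ((2*(k:ℝ)-1 : ℝ):ℂ) by push_cast; ring]
    exact Complex.ofReal_ne_zero.mpr (by linarith)
  have h2k2 : (2*(k:ℂ) + 1) ≠ 0 := by
    rw [show (2*(k:ℂ)+1) = ((2*(k:ℝ)+1 : ℝ):ℂ) by push_cast; ring]
    exact Complex.ofReal_ne_zero.mpr (by linarith)
  cases n with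
  | zero =>
    simp only [shift, co, P_zero, Nat.factorial_zero, Nat.cast_zero, Nat.cast_one, mul_zero]
    norm_num [P_zero]
  | succ j =>
    simp only [shift, co]
    have hb0 : (0:ℝ) < (k:ℝ)+1/2 := by linarith
    have hbj : P (((k:ℝ)+1/2 : ℝ):ℂ) j ≠ 0 := P_real_ne hb0 j
    have hb1j : P ((k:ℂ)+1/2+1) j ≠ 0 := by
      rw [← c2]; exact P_real_ne (by linarith) j
    have hb : ((k:ℂ)+1/2) ≠ 0 := by
      rw [← c1]; exact Complex.ofReal_ne_zero.mpr (by linarith)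
    have hbm1 : ((k:ℂ)+1/2-1) ≠ 0 := by
      rw [← c3]; exact Complex.ofReal_ne_zero.mpr (by linarith)
    have hbjne : ((k:ℂ)+1/2+(j:ℂ)) ≠ 0 := by
      rw [show ((k:ℂ)+1/2+(j:ℂ)) = (((k:ℝ)+1/2+(j:ℝ) : ℝ):ℂ) by push_cast; ring]
      exact Complex.ofReal_ne_zero.mpr (by positivity)
    have hfac : ((j.factorial : ℂ)) ≠ 0 := by
      exact_mod_cast Nat.cast_ne_zero.mpr j.factorial_ne_zero
    have hj1 : ((j:ℂ)+1) ≠ 0 := by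
      rw [show ((j:ℂ)+1) = (((j:ℝ)+1 : ℝ):ℂ) by push_cast; ring]
      exact Complex.ofReal_ne_zero.mpr (by positivity)
    -- expand Pochhammers
    have e1 : P a (j+1) = P a j * (a + j) := P_succ a j
    have e2 : P (((k:ℝ)+1/2 : ℝ):ℂ) (j+1) = P (((k:ℝ)+1/2 : ℝ):ℂ) j * (((k:ℂ)+1/2) + j) := by
      rw [P_succ, c1]
    have e3 : P (a - 1) (j+1) = (a - 1) * P a j := by
      rw [P_succ_left, show a - 1 + 1 = a by ring]
    have e4 : P (((k:ℝ)+1/2-1 : ℝ):ℂ) (j+1) = ((k:ℂ)+1/2-1) * P (((k:ℝ)+1/2 : ℝ):ℂ) j := by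
      rw [P_succ_left, c3, show (k:ℂ)+1/2-1+1 = (((k:ℝ)+1/2:ℝ):ℂ) by rw [c1]; ring]
    have hX : P (((k:ℝ)+1/2+1 : ℝ):ℂ) j
        = P (((k:ℝ)+1/2 : ℝ):ℂ) j * (((k:ℂ)+1/2) + (j:ℂ)) / ((k:ℂ)+1/2) := by
      rw [c2, eq_div_iff hb]
      have h := P_succ_left ((k:ℂ)+1/2) j
      have h2 := P_succ (((k:ℝ)+1/2 : ℝ):ℂ) j
      rw [c1] at h2 ⊢
      calc P ((k:ℂ)+1/2+1) j * ((k:ℂ)+1/2)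
          = ((k:ℂ)+1/2) * P ((k:ℂ)+1/2+1) j := by ring
        _ = P ((k:ℂ)+1/2) (j+1) := h.symm
        _ = P ((k:ℂ)+1/2) j * ((k:ℂ)+1/2 + j) := h2
    have efac : (((j+1).factorial : ℕ) : ℂ) = ((j:ℂ)+1) * (j.factorial : ℂ) := by
      rw [Nat.factorial_succ]; push_cast; ring
    rw [e1, e2, e3, e4, hX, efac, div_div_eq_mul_div]
    have hbj' : P ((k:ℂ)+1/2) j ≠ 0 := by rw [← c1]; exact hbj
    push_cast
    linear_combination key_alg a ((k:ℂ)+1/2) (k:ℂ) (m:ℂ) (j:ℂ) (P a j)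
      (P ((k:ℂ)+1/2) j) (j.factorial:ℂ) hb hbj' hbm1 hbjne h2k1 h2k2 hj1 hfac ha rfl

lemma pow_mul_derivsum (k : ℕ) (hk : 1 ≤ k) (a : ℂ) (b : ℝ) (w : ℂ) :
    w^k * ∑' n, co a b n * (((2*n : ℕ):ℂ) * w^(2*n-1))
      = w^(k-1) * ∑' n : ℕ, (2*(n:ℂ)) * co a b n * w^(2*n) := by
  obtain ⟨k₀, rfl⟩ : ∃ k₀, k = k₀ + 1 := ⟨k - 1, by omega⟩
  rw [← tsum_mul_left, ← tsum_mul_left]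
  apply tsum_congr
  intro n
  cases n with
  | zero => simp
  | succ n =>
    have h1 : 2*(n+1) - 1 = 2*n+1 := by omega
    simp only [h1, Nat.add_sub_cancel]
    push_cast
    ring

lemma series_key (k : ℕ) (hk : 1 ≤ k) (m : ℤ) (w : ℂ) :
    2*(w^2 * ∑' n : ℕ, co ((1+2*(k:ℂ)-(m:ℂ))/4) ((k:ℝ)+1/2) n * w^(2*n))
      - ((k:ℂ) * (∑' n : ℕ, co ((1+2*(k:ℂ)-(m:ℂ))/4) ((k:ℝ)+1/2) n * w^(2*n))
         + ∑' n : ℕ, (2*(n:ℂ)) * co ((1+2*(k:ℂ)-(m:ℂ))/4) ((k:ℝ)+1/2) n * w^(2*n))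
    = ((1 + 2*(k:ℂ) + (m:ℂ)) * ((k:ℂ) - 1) / ((2*(k:ℂ) - 1) * (2*(k:ℂ) + 1)))
        * (w^2 * ∑' n : ℕ, co ((1+2*(k:ℂ)-(m:ℂ))/4) ((k:ℝ)+1/2+1) n * w^(2*n))
      - (k:ℂ) * ∑' n : ℕ, co ((1+2*(k:ℂ)-(m:ℂ))/4 - 1) ((k:ℝ)+1/2-1) n * w^(2*n) := by
  have hk1 : (1:ℝ) ≤ (k:ℝ) := by exact_mod_cast hk
  set a : ℂ := (1+2*(k:ℂ)-(m:ℂ))/4 with ha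
  set b : ℝ := (k:ℝ)+1/2 with hb
  set c₁ : ℂ := (1 + 2*(k:ℂ) + (m:ℂ)) * ((k:ℂ) - 1) / ((2*(k:ℂ) - 1) * (2*(k:ℂ) + 1)) with hc
  have hbge : (1:ℝ)/2 ≤ b := by rw [hb]; linarith
  have hbge1 : (1:ℝ)/2 ≤ b+1 := by linarith
  have hbgem : (1:ℝ)/2 ≤ b-1 := by rw [hb]; linarith
  have sum0 := summable_co a hbge w
  have sum1 := summable_co a hbge1 w
  have sum2 := summable_co (a-1) hbgem w
  have sA : Summable fun n : ℕ => 2 * (shift (co a b) n * w^(2*n)) :=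
    (summable_shift _ w sum0).mul_left 2
  have sB : Summable fun n : ℕ => (k:ℂ) * (co a b n * w^(2*n)) := sum0.mul_left _
  have sC := summable_co_two a hbge w
  have s1' : Summable fun n : ℕ => c₁ * (shift (co a (b+1)) n * w^(2*n)) :=
    (summable_shift _ w sum1).mul_left _
  have s2' : Summable fun n : ℕ => (k:ℂ) * (co (a-1) (b-1) n * w^(2*n)) := sum2.mul_left _
  have big : (∑' n : ℕ, (2 * (shift (co a b) n * w^(2*n))
        - ((k:ℂ) * (co a b n * w^(2*n)) + (2*(n:ℂ)) * co a b n * w^(2*n))))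
      = ∑' n : ℕ, (c₁ * (shift (co a (b+1)) n * w^(2*n))
        - (k:ℂ) * (co (a-1) (b-1) n * w^(2*n))) := by
    apply tsum_congr
    intro n
    have h := coef_id k hk m n
    rw [← ha, ← hb, ← hc] at h
    linear_combination (w^(2*n)) * h
  calc 2*(w^2 * ∑' n : ℕ, co a b n * w^(2*n))
      - ((k:ℂ) * (∑' n : ℕ, co a b n * w^(2*n)) + ∑' n : ℕ, (2*(n:ℂ)) * co a b n * w^(2*n))
      = (∑' n : ℕ, 2 * (shift (co a b) n * w^(2*n)))
        - ((∑' n : ℕ, (k:ℂ) * (co a b n * w^(2*n)))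
           + ∑' n : ℕ, (2*(n:ℂ)) * co a b n * w^(2*n)) := by
        rw [sq_mul_tsum _ _ sum0, ← tsum_mul_left, ← tsum_mul_left]
    _ = ∑' n : ℕ, (2 * (shift (co a b) n * w^(2*n))
        - ((k:ℂ) * (co a b n * w^(2*n)) + (2*(n:ℂ)) * co a b n * w^(2*n))) := by
        rw [← Summable.tsum_add sB sC, ← Summable.tsum_sub sA (sB.add sC)]
    _ = ∑' n : ℕ, (c₁ * (shift (co a (b+1)) n * w^(2*n))
        - (k:ℂ) * (co (a-1) (b-1) n * w^(2*n))) := big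
    _ = (∑' n : ℕ, c₁ * (shift (co a (b+1)) n * w^(2*n)))
        - ∑' n : ℕ, (k:ℂ) * (co (a-1) (b-1) n * w^(2*n)) := Summable.tsum_sub s1' s2'
    _ = c₁ * (w^2 * ∑' n : ℕ, co a (b+1) n * w^(2*n))
        - (k:ℂ) * ∑' n : ℕ, co (a-1) (b-1) n * w^(2*n) := by
        rw [tsum_mul_left, tsum_mul_left, sq_mul_tsum _ _ sum1]

lemma Psi_eq (m : ℤ) (k : ℕ) (θ t : ℝ) :
    Psi m k θ t = Complex.exp (-I*(m:ℂ)*(θ:ℂ)/2) * (Complex.exp (-(t:ℂ)^2/2) * (t:ℂ)^k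
      * ∑' n : ℕ, co ((1+2*(k:ℂ)-(m:ℂ))/4) ((k:ℝ)+1/2) n * (t:ℂ)^(2*n)) := by
  rw [Psi, oneFone]
  have h : (∑' n : ℕ, ((ascPochhammer ℂ n).eval ((1 + 2*(k:ℂ) - (m:ℂ))/4)
        / (ascPochhammer ℂ n).eval ((k:ℂ) + 1/2)) * ((t:ℂ)^2)^n / (n.factorial : ℂ))
      = ∑' n : ℕ, co ((1+2*(k:ℂ)-(m:ℂ))/4) ((k:ℝ)+1/2) n * (t:ℂ)^(2*n) := by
    apply tsum_congr
    intro n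
    rw [co, P, P, ← pow_mul,
      show (((k:ℝ)+1/2 : ℝ):ℂ) = (k:ℂ)+1/2 by push_cast; ring]
    ring
  rw [h]
  ring

end EplusAux

open EplusAux in
set_option maxHeartbeats 1600000 in
/-- The Heisenberg action ties adjacent eigenspaces together:
`E⁺Ψ_{m,k} = ((1+2k+m)(k-1)/((2k-1)(2k+1))) Ψ_{m+2,k+1} - k Ψ_{m+2,k-1}`. -/
theorem Eplus_action (k : ℕ) (hk : 1 ≤ k) (m : ℤ) :
    ∀ θ y : ℝ,
      Eplus (Psi m k) θ y
        = ((1 + 2 * (k : ℂ) + (m : ℂ)) * ((k : ℂ) - 1)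
              / ((2 * (k : ℂ) - 1) * (2 * (k : ℂ) + 1))) * Psi (m + 2) (k + 1) θ y
          - (k : ℂ) * Psi (m + 2) (k - 1) θ y := by
  intro θ y
  obtain ⟨k₀, rfl⟩ : ∃ k₀, k = k₀ + 1 := ⟨k - 1, by omega⟩
  have hbge : (1:ℝ)/2 ≤ ((k₀+1:ℕ):ℝ)+1/2 := by
    have := Nat.cast_nonneg (α := ℝ) (k₀+1)
    linarith
  -- derivative of Psi in y
  have hE : HasDerivAt (fun t:ℝ => Complex.exp (-(t:ℂ)^2/2))
      (-(y:ℂ) * Complex.exp (-(y:ℂ)^2/2)) y := by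
    have hp : HasDerivAt (fun z:ℂ => -z^2/2) (-(y:ℂ)) ((y:ℂ)) := by
      refine ((hasDerivAt_pow 2 ((y:ℂ))).neg.div_const 2).congr_deriv ?_
      push_cast
      ring
    have h2 := hp.cexp
    have h3 := h2.comp_ofReal
    simpa [mul_comm] using h3
  have hY : HasDerivAt (fun t:ℝ => (t:ℂ)^(k₀+1))
      (((k₀+1:ℕ):ℂ) * (y:ℂ)^(k₀+1-1)) y :=
    (hasDerivAt_pow (k₀+1) ((y:ℂ))).comp_ofReal
  have hG := hasDerivAt_G ((1+2*((k₀+1:ℕ):ℂ)-(m:ℂ))/4) hbge y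
  have hfun : (fun t : ℝ => Psi m (k₀+1) θ t)
      = fun t : ℝ => Complex.exp (-I*(m:ℂ)*(θ:ℂ)/2)
          * ((Complex.exp (-(t:ℂ)^2/2) * (t:ℂ)^(k₀+1))
          * ∑' n : ℕ, co ((1+2*((k₀+1:ℕ):ℂ)-(m:ℂ))/4) (((k₀+1:ℕ):ℝ)+1/2) n * (t:ℂ)^(2*n)) := by
    funext t
    rw [Psi_eq]
  have hD := ((hE.mul hY).mul hG).const_mul (Complex.exp (-I*(m:ℂ)*(θ:ℂ)/2))
  simp only [Pi.mul_apply] at hD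
  rw [← hfun] at hD
  simp only [Eplus, pderivY]
  rw [hD.deriv, Psi_eq m (k₀+1) θ y, Psi_eq (m+2) (k₀+1+1) θ y, Psi_eq (m+2) (k₀+1-1) θ y]
  simp only [Nat.add_sub_cancel]
  have ea1 : (1+2*((k₀+1+1:ℕ):ℂ)-((m+2:ℤ):ℂ))/4 = (1+2*((k₀+1:ℕ):ℂ)-(m:ℂ))/4 := by
    push_cast; ring
  have eb1 : ((k₀+1+1:ℕ):ℝ)+1/2 = (((k₀+1:ℕ):ℝ)+1/2)+1 := by push_cast; ring
  have ea2 : (1+2*((k₀:ℕ):ℂ)-((m+2:ℤ):ℂ))/4 = (1+2*((k₀+1:ℕ):ℂ)-(m:ℂ))/4 - 1 := by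
    push_cast; ring
  have eb2 : ((k₀:ℕ):ℝ)+1/2 = (((k₀+1:ℕ):ℝ)+1/2)-1 := by push_cast; ring
  rw [ea1, eb1, ea2, eb2]
  have em : ((m+2:ℤ):ℂ) = (m:ℂ)+2 := by push_cast; ring
  rw [em]
  have hCexp : Complex.exp (-I*(θ:ℂ)) * Complex.exp (-I*(m:ℂ)*(θ:ℂ)/2)
      = Complex.exp (-I*((m:ℂ)+2)*(θ:ℂ)/2) := by
    rw [← Complex.exp_add]
    congr 1
    ring
  have hSd := pow_mul_derivsum (k₀+1) (by omega) ((1+2*((k₀+1:ℕ):ℂ)-(m:ℂ))/4)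
      (((k₀+1:ℕ):ℝ)+1/2) (y:ℂ)
  simp only [Nat.add_sub_cancel] at hSd
  have hKEY := series_key (k₀+1) (by omega) m (y:ℂ)
  linear_combination
    (Complex.exp (-(y:ℂ)^2/2) * (y:ℂ)^k₀ *
      (((1 + 2*((k₀+1:ℕ):ℂ) + (m:ℂ)) * (((k₀+1:ℕ):ℂ) - 1)
          / ((2*((k₀+1:ℕ):ℂ) - 1) * (2*((k₀+1:ℕ):ℂ) + 1)))
         * ((y:ℂ)^2 * ∑' n : ℕ, co ((1+2*((k₀+1:ℕ):ℂ)-(m:ℂ))/4)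
              ((((k₀+1:ℕ):ℝ)+1/2)+1) n * (y:ℂ)^(2*n))
       - ((k₀+1:ℕ):ℂ) * ∑' n : ℕ, co ((1+2*((k₀+1:ℕ):ℂ)-(m:ℂ))/4 - 1)
              ((((k₀+1:ℕ):ℝ)+1/2)-1) n * (y:ℂ)^(2*n))) * hCexp
    + (Complex.exp (-I*(θ:ℂ)) * Complex.exp (-I*(m:ℂ)*(θ:ℂ)/2)
        * Complex.exp (-(y:ℂ)^2/2) * (y:ℂ)^k₀) * hKEY
    - (Complex.exp (-I*(θ:ℂ)) * Complex.exp (-I*(m:ℂ)*(θ:ℂ)/2)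
        * Complex.exp (-(y:ℂ)^2/2)) * hSd
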